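/- arXiv:2210.00414 — 4 statements merged into one kernel-verified Lean document; each statement's English description precedes it below -/
import Mathlib

section
/- (Claim C) Under the network hypotheses, the half-line L = {t·v : t ≥ 0} ⊂ ℝ^n is F-invariant: F(L) ⊆ L. -/
/-- The activation function `f_i` with parameters `ρ`, `δ`, `v` (here `v = v_i`). -/
noncomputable def act (ρ δ v : ℝ) (x : ℝ) : ℝ :=
  if x < 2 * (1 - δ) * ρ * v then x / (2 * ρ) + δ * v
  else if x ≤ ρ * v then x / (2 * ρ) + (δ - 1) * v
  else v / 2 + (δ - 1) * v

/-- The Hopfield network map `F : ℝ^n → ℝ^n`, `F_i(x) = f_i (∑_j w_{ij} x_j)`. -/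
noncomputable def net {n : ℕ} (W : Matrix (Fin n) (Fin n) ℝ) (ρ δ : ℝ)
    (v : Fin n → ℝ) (x : Fin n → ℝ) : Fin n → ℝ :=
  fun i => act ρ δ (v i) (∑ j, W i j * x j)

/-- Claim C: under the network hypotheses, the half-line `L = {t·v : t ≥ 0}` is
invariant under the network map: `F(L) ⊆ L`. -/
theorem claimC {n : ℕ} (W : Matrix (Fin n) (Fin n) ℝ) (ρ δ : ℝ) (v : Fin n → ℝ)
    (hWpos : ∀ i j, 0 < W i j)
    (heig : W.mulVec v = ρ • v)
    (hv : ∀ i, 0 < v i) (hsum : ∑ i, v i = 1)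
    (h1 : 1 / 2 < 2 * (1 - δ)) (h2 : 2 * (1 - δ) < ρ) (h3 : ρ < 1) :
    net W ρ δ v '' {x : Fin n → ℝ | ∃ t : ℝ, 0 ≤ t ∧ x = t • v} ⊆
      {x : Fin n → ℝ | ∃ t : ℝ, 0 ≤ t ∧ x = t • v} := by
  rintro x ⟨y, ⟨t, ht, rfl⟩, rfl⟩
  have hρ : 0 < ρ := by linarith
  have hδ : 1 / 2 < δ := by linarith
  refine ⟨if t < 2 * (1 - δ) then t / 2 + δ else if t ≤ 1 then t / 2 + (δ - 1) else δ - 1 / 2,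
    ?_, ?_⟩
  · split_ifs with ha hb <;> [linarith; linarith [not_lt.mp ha]; linarith]
  · funext i
    have hvi := hv i
    have hkey : ∑ j, W i j * (t * v j) = t * (ρ * v i) := by
      have h := congrFun heig i
      simp only [Matrix.mulVec, dotProduct, Pi.smul_apply, smul_eq_mul] at h
      calc ∑ j, W i j * (t * v j) = t * ∑ j, W i j * v j := by
            rw [Finset.mul_sum]; exact Finset.sum_congr rfl fun j _ => by ring
        _ = t * (ρ * v i) := by rw [h]
    have hρvi : 0 < ρ * v i := mul_pos hρ hvi
    have hc1 : t * (ρ * v i) < 2 * (1 - δ) * ρ * v i ↔ t < 2 * (1 - δ) := by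
      constructor <;> intro h <;> nlinarith
    have hc2 : t * (ρ * v i) ≤ ρ * v i ↔ t ≤ 1 := by
      constructor <;> intro h <;> nlinarith
    simp only [net, act, Pi.smul_apply, smul_eq_mul]
    rw [hkey]
    by_cases ha : t < 2 * (1 - δ)
    · rw [if_pos (hc1.mpr ha), if_pos ha]
      field_simp
    · rw [if_neg (fun h => ha (hc1.mp h)), if_neg ha]
      by_cases hb : t ≤ 1
      · rw [if_pos (hc2.mpr hb), if_pos hb]
        field_simp
      · rw [if_neg (fun h => hb (hc2.mp h)), if_neg hb]
        ring
end

section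
/- (Claim D, semiconjugacy) Under the network hypotheses, for every t ≥ 0 one has F(t·v) = g̃(t)·v, where g̃ is the one-dimensional piecewise-affine map determined by δ. Equivalently, with the homeomorphism h : L → [0,∞), h(s·v) = s, the identity h(F(x)) = g̃(h(x)) holds for all x ∈ L = {t·v : t ≥ 0}. -/
/-- The one-dimensional piecewise-affine map `g̃ : [0,∞) → ℝ` determined by `δ`:
`g̃(t) = t/2 + δ` on `[0, 2(1−δ))`, `g̃(t) = t/2 + δ − 1` on `[2(1−δ), 1]`, and
`g̃(t) = δ − 1/2` for `t > 1`. -/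
noncomputable def gTilde (δ : ℝ) (t : ℝ) : ℝ :=
  if t < 2 * (1 - δ) then t / 2 + δ
  else if t ≤ 1 then t / 2 + δ - 1
  else δ - 1 / 2

/-- Claim D (semiconjugacy): under the network hypotheses, `F(t·v) = g̃(t)·v` for
every `t ≥ 0`; equivalently, via the homeomorphism `h(s·v) = s` of the half-line
`L = {t·v : t ≥ 0}` with `[0,∞)`, we have `h(F(x)) = g̃(h(x))` for all `x ∈ L`. -/
theorem claimD {n : ℕ} (W : Matrix (Fin n) (Fin n) ℝ) (ρ δ : ℝ) (v : Fin n → ℝ)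
    (hWpos : ∀ i j, 0 < W i j)
    (heig : W.mulVec v = ρ • v)
    (hv : ∀ i, 0 < v i) (hsum : ∑ i, v i = 1)
    (h1 : 1 / 2 < 2 * (1 - δ)) (h2 : 2 * (1 - δ) < ρ) (h3 : ρ < 1) :
    ∀ t : ℝ, 0 ≤ t → net W ρ δ v (t • v) = gTilde δ t • v := by
  intro t ht
  have hρ : (0:ℝ) < ρ := lt_trans (by linarith) h2
  funext i
  have hvi := hv i
  have hsumeq : (∑ j, W i j * (t • v) j) = t * ρ * v i := by
    have h0 : (∑ j, W i j * v j) = ρ * v i := by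
      have := congrFun heig i
      simpa [Matrix.mulVec, dotProduct, Pi.smul_apply, smul_eq_mul] using this
    calc (∑ j, W i j * (t • v) j) = t * ∑ j, W i j * v j := by
          rw [Finset.mul_sum]; apply Finset.sum_congr rfl; intro j _
          simp [Pi.smul_apply, smul_eq_mul]; ring
      _ = t * ρ * v i := by rw [h0]; ring
  show act ρ δ (v i) (∑ j, W i j * (t • v) j) = gTilde δ t * v i
  rw [hsumeq]
  unfold act gTilde
  have hpv : (0:ℝ) < ρ * v i := mul_pos hρ hvi
  have key1 : t * ρ * v i < 2 * (1 - δ) * ρ * v i ↔ t < 2 * (1 - δ) := by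
    rw [show t * ρ * v i = t * (ρ * v i) by ring,
      show 2 * (1 - δ) * ρ * v i = (2 * (1 - δ)) * (ρ * v i) by ring]
    exact mul_lt_mul_iff_left₀ hpv
  have key2 : t * ρ * v i ≤ ρ * v i ↔ t ≤ 1 := by
    rw [show t * ρ * v i = t * (ρ * v i) by ring]
    exact mul_le_iff_le_one_left hpv
  by_cases hA : t < 2 * (1 - δ)
  · rw [if_pos (key1.mpr hA), if_pos hA]
    field_simp
  · rw [if_neg (fun h => hA (key1.mp h)), if_neg hA]
    by_cases hB : t ≤ 1
    · rw [if_pos (key2.mpr hB), if_pos hB]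
      field_simp; ring
    · rw [if_neg (fun h => hB (key2.mp h)), if_neg hB]
      ring
end

section
/- (Claim E, transport of ω-limit sets) Under the network hypotheses, suppose C ⊆ [0,1] is a Cantor set such that for every t_0 ∈ C the ω-limit set of t_0 under g equals C. Let C_L = {t·v : t ∈ C} ⊂ ℝ^n. Then C_L is a Cantor set and, for every initial state x_0 ∈ C_L, the ω-limit set of x_0 under the network map F equals C_L. -/
/-- The Hopfield network map `F` on `ℝ^n` (with the Euclidean norm),
`F_i(x) = f_i (∑_j w_{ij} x_j)`. -/
noncomputable def netE {n : ℕ} (W : Matrix (Fin n) (Fin n) ℝ) (ρ δ : ℝ)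
    (v : EuclideanSpace ℝ (Fin n)) (x : EuclideanSpace ℝ (Fin n)) :
    EuclideanSpace ℝ (Fin n) :=
  WithLp.toLp 2 (fun i => act ρ δ (v i) (∑ j, W i j * x j))

/-- The piecewise-affine map `g : [0,1] → [0,1]`:
`g(t) = t/2 + δ` on `[0, 2(1−δ))` and `g(t) = t/2 + δ − 1` on `[2(1−δ), 1]`. -/
noncomputable def gMap (δ : ℝ) (t : ℝ) : ℝ :=
  if t < 2 * (1 - δ) then t / 2 + δ else t / 2 + δ - 1

/-- A Cantor set: a nonempty compact set that is perfect and totally disconnected. -/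
def IsCantorSet {X : Type*} [TopologicalSpace X] (C : Set X) : Prop :=
  C.Nonempty ∧ IsCompact C ∧ Perfect C ∧ IsTotallyDisconnected C

/-- The ω-limit set of `x` under `f`: all limits of subsequences of the orbit. -/
def omegaLimitSet {X : Type*} [TopologicalSpace X] (f : X → X) (x : X) : Set X :=
  {p | ∃ φ : ℕ → ℕ, StrictMono φ ∧
    Filter.Tendsto (fun k => f^[φ k] x) Filter.atTop (nhds p)}

/-- Claim E (transport of ω-limit sets): under the network hypotheses, if `C ⊆ [0,1]`
is a Cantor set such that the ω-limit set under `g` of every `t₀ ∈ C` equals `C`, then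
`C_L = {t·v : t ∈ C}` is a Cantor set and the ω-limit set under the network map `F` of
every initial state `x₀ ∈ C_L` equals `C_L`. -/
theorem claimE {n : ℕ} (W : Matrix (Fin n) (Fin n) ℝ) (ρ δ : ℝ)
    (v : EuclideanSpace ℝ (Fin n))
    (hWpos : ∀ i j, 0 < W i j)
    (heig : W.mulVec v = ρ • v)
    (hv : ∀ i, 0 < v i) (hsum : ∑ i, v i = 1)
    (h1 : 1 / 2 < 2 * (1 - δ)) (h2 : 2 * (1 - δ) < ρ) (h3 : ρ < 1)
    (C : Set ℝ) (hCsub : C ⊆ Set.Icc (0 : ℝ) 1) (hCantor : IsCantorSet C)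
    (homega : ∀ t₀ ∈ C, omegaLimitSet (gMap δ) t₀ = C) :
    IsCantorSet ((fun t : ℝ => t • v) '' C) ∧
    ∀ x₀ ∈ (fun t : ℝ => t • v) '' C,
      omegaLimitSet (netE W ρ δ v) x₀ = (fun t : ℝ => t • v) '' C := by
  have hρ : (0:ℝ) < ρ := by linarith
  have hδ1 : δ < 1 := by linarith
  have hδ0 : (1:ℝ)/2 < δ := by linarith
  set h : ℝ → EuclideanSpace ℝ (Fin n) := fun t => t • v with hh
  have hcont : Continuous h := continuous_id.smul continuous_const
  set π : EuclideanSpace ℝ (Fin n) → ℝ := fun x => ∑ i, x i with hπdef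
  have hπcont : Continuous π := continuous_finset_sum _ fun i _ => PiLp.continuous_apply 2 _ i
  have hπh : ∀ t, π (h t) = t := by
    intro t
    simp only [hπdef, hh]
    have : ∀ i, (t • v) i = t * v i := fun i => rfl
    rw [Finset.sum_congr rfl fun i _ => this i, ← Finset.mul_sum, hsum, mul_one]
  have hinj : Function.Injective h := fun a b hab => by
    have := congrArg π hab; rwa [hπh, hπh] at this
  have hg : ∀ t ∈ Set.Icc (0:ℝ) 1, gMap δ t ∈ Set.Icc (0:ℝ) 1 := by
    rintro t ⟨ht0, ht1⟩
    unfold gMap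
    split_ifs with hcase
    · exact ⟨by linarith, by linarith⟩
    · push_neg at hcase; exact ⟨by linarith, by linarith⟩
  have hline : ∀ t ∈ Set.Icc (0:ℝ) 1, netE W ρ δ v (h t) = h (gMap δ t) := by
    rintro t ⟨ht0, ht1⟩
    ext i
    have hvi : 0 < v i := hv i
    have hsumW : ∑ j, W i j * (h t) j = t * (ρ * v i) := by
      have hW : ∑ j, W i j * v j = ρ * v i := by
        have := congrFun heig i
        simpa [Matrix.mulVec, dotProduct] using this
      have : ∀ j, (h t) j = t * v j := fun j => rfl
      calc ∑ j, W i j * (h t) j = ∑ j, t * (W i j * v j) := by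
            apply Finset.sum_congr rfl; intro j _; rw [this j]; ring
        _ = t * (ρ * v i) := by rw [← Finset.mul_sum, hW]
    show act ρ δ (v i) (∑ j, W i j * (h t) j) = gMap δ t * v i
    rw [hsumW]
    unfold act gMap
    have hρvi : 0 < ρ * v i := mul_pos hρ hvi
    rcases lt_or_ge t (2 * (1 - δ)) with hc | hc
    · rw [if_pos (by nlinarith), if_pos hc]
      field_simp
    · rw [if_neg (by nlinarith), if_neg (not_lt.2 hc),
        if_pos (by nlinarith)]
      field_simp
      ring
  have hiter : ∀ k, ∀ t ∈ Set.Icc (0:ℝ) 1,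
      (netE W ρ δ v)^[k] (h t) = h ((gMap δ)^[k] t) ∧
        (gMap δ)^[k] t ∈ Set.Icc (0:ℝ) 1 := by
    intro k
    induction k with
    | zero => intro t ht; exact ⟨rfl, ht⟩
    | succ k ih =>
      intro t ht
      obtain ⟨he, hm⟩ := ih t ht
      rw [Function.iterate_succ_apply', Function.iterate_succ_apply', he,
        hline _ hm]
      exact ⟨rfl, hg _ hm⟩
  have homegaF : ∀ t₀ ∈ C, omegaLimitSet (netE W ρ δ v) (h t₀) = h '' C := by
    intro t₀ ht₀
    have ht₀I : t₀ ∈ Set.Icc (0:ℝ) 1 := hCsub ht₀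
    ext q
    constructor
    · rintro ⟨φ, hφ, hten⟩
      have hrw : ∀ k, (netE W ρ δ v)^[φ k] (h t₀) = h ((gMap δ)^[φ k] t₀) :=
        fun k => (hiter (φ k) t₀ ht₀I).1
      have hten' : Filter.Tendsto (fun k => h ((gMap δ)^[φ k] t₀))
          Filter.atTop (nhds q) := hten.congr (fun k => hrw k)
      have hs : Filter.Tendsto (fun k => (gMap δ)^[φ k] t₀)
          Filter.atTop (nhds (π q)) := by
        have := (hπcont.tendsto q).comp hten'
        exact this.congr fun k => hπh _
      have hpC : π q ∈ C := by
        rw [← homega t₀ ht₀]; exact ⟨φ, hφ, hs⟩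
      have : Filter.Tendsto (fun k => h ((gMap δ)^[φ k] t₀))
          Filter.atTop (nhds (h (π q))) := (hcont.tendsto _).comp hs
      exact ⟨π q, hpC, (tendsto_nhds_unique hten' this).symm⟩
    · rintro ⟨p, hpC, rfl⟩
      have : p ∈ omegaLimitSet (gMap δ) t₀ := by rw [homega t₀ ht₀]; exact hpC
      obtain ⟨φ, hφ, hp⟩ := this
      refine ⟨φ, hφ, ?_⟩
      have : Filter.Tendsto (fun k => h ((gMap δ)^[φ k] t₀))
          Filter.atTop (nhds (h p)) := (hcont.tendsto _).comp hp
      exact this.congr (fun k => ((hiter (φ k) t₀ ht₀I).1).symm)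
  obtain ⟨hne, hcomp, hperf, htd⟩ := hCantor
  have himgcomp : IsCompact (h '' C) := hcomp.image hcont
  refine ⟨⟨hne.image h, himgcomp, ?_, ?_⟩, ?_⟩
  · refine ⟨himgcomp.isClosed, ?_⟩
    rintro x ⟨t, htC, rfl⟩
    rw [accPt_iff_nhds]
    intro U hU
    have hU' : h ⁻¹' U ∈ nhds t := hcont.continuousAt.preimage_mem_nhds hU
    obtain ⟨s, ⟨hsU, hsC⟩, hst⟩ := accPt_iff_nhds.1 (hperf.acc t htC) _ hU'
    exact ⟨h s, ⟨hsU, ⟨s, hsC, rfl⟩⟩, fun e => hst (hinj e)⟩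
  · intro s hsub hconn
    have hπs : π '' s ⊆ C := by
      rintro _ ⟨z, hzs, rfl⟩
      obtain ⟨t, htC, rfl⟩ := hsub hzs
      rwa [hπh]
    have hsing : (π '' s).Subsingleton :=
      htd _ hπs (hconn.image π hπcont.continuousOn)
    intro x hx y hy
    obtain ⟨tx, _, rfl⟩ := hsub hx
    obtain ⟨ty, _, rfl⟩ := hsub hy
    have : π (h tx) = π (h ty) :=
      hsing ⟨h tx, hx, rfl⟩ ⟨h ty, hy, rfl⟩
    rw [hπh, hπh] at this
    rw [this]
  · rintro x₀ ⟨t₀, ht₀, rfl⟩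
    exact homegaF t₀ ht₀
end

section
/- (Transport of sensitive dependence) Under the network hypotheses, let t_0 ∈ [0,1] and η > 0 be such that for every ε > 0 there exist s_0 ∈ [0,1] and k ∈ ℕ with |s_0 − t_0| ≤ ε and |g^k(s_0) − g^k(t_0)| ≥ η. Then the network map F has sensitive dependence on initial conditions at the point x_0 = t_0·v of the state space X = [0,1]^n, with sensitivity constant η·‖v‖: for every ε > 0 there exist y_0 ∈ X and k ∈ ℕ with ‖y_0 − x_0‖ ≤ ε and ‖F^k(y_0) − F^k(x_0)‖ ≥ η·‖v‖, where ‖·‖ is the Euclidean norm. -/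
/-- Transport of sensitive dependence: under the network hypotheses, if `g` has
sensitive dependence on initial conditions at `t₀ ∈ [0,1]` with sensitivity constant
`η > 0`, then the network map `F` has sensitive dependence on initial conditions at
`x₀ = t₀·v ∈ X = [0,1]^n` with sensitivity constant `η·‖v‖` (Euclidean norm). -/
theorem transport_sensitivity {n : ℕ} (W : Matrix (Fin n) (Fin n) ℝ) (ρ δ : ℝ)
    (v : EuclideanSpace ℝ (Fin n))
    (hWpos : ∀ i j, 0 < W i j)
    (heig : W.mulVec v = ρ • v)
    (hv : ∀ i, 0 < v i) (hsum : ∑ i, v i = 1)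
    (h1 : 1 / 2 < 2 * (1 - δ)) (h2 : 2 * (1 - δ) < ρ) (h3 : ρ < 1)
    (t₀ : ℝ) (ht₀ : t₀ ∈ Set.Icc (0 : ℝ) 1)
    (η : ℝ) (hη : 0 < η)
    (hsens : ∀ ε > (0 : ℝ), ∃ s₀ ∈ Set.Icc (0 : ℝ) 1, ∃ k : ℕ,
      |s₀ - t₀| ≤ ε ∧ η ≤ |(gMap δ)^[k] s₀ - (gMap δ)^[k] t₀|) :
    ∀ ε > (0 : ℝ), ∃ y₀ : EuclideanSpace ℝ (Fin n),
      (∀ i, y₀ i ∈ Set.Icc (0 : ℝ) 1) ∧ ∃ k : ℕ,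
        ‖y₀ - t₀ • v‖ ≤ ε ∧
        η * ‖v‖ ≤ ‖(netE W ρ δ v)^[k] y₀ - (netE W ρ δ v)^[k] (t₀ • v)‖ := by
  have hρ : (0:ℝ) < ρ := by linarith
  have hveq : ∀ i, ∑ j, W i j * v j = ρ * v i := by
    intro i
    have := congrFun heig i
    simpa [Matrix.mulVec, dotProduct] using this
  have hstep : ∀ t, t ∈ Set.Icc (0:ℝ) 1 →
      netE W ρ δ v (t • v) = (gMap δ t) • v := by
    intro t ht
    ext i
    have hvi := hv i
    have hρv : 0 < ρ * v i := mul_pos hρ hvi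
    have hsumi : ∑ j, W i j * (t • v) j = t * (ρ * v i) := by
      have h : ∀ j, W i j * (t • v) j = t * (W i j * v j) := by
        intro j
        simp only [PiLp.smul_apply, smul_eq_mul]
        ring
      rw [Finset.sum_congr rfl (fun j _ => h j), ← Finset.mul_sum, hveq i]
    show act ρ δ (v i) (∑ j, W i j * (t • v) j) = (gMap δ t) * v i
    rw [hsumi]
    unfold act gMap
    by_cases hc : t < 2 * (1 - δ)
    · rw [if_pos, if_pos hc]
      · field_simp
      · calc t * (ρ * v i) < (2*(1-δ)) * (ρ * v i) := mul_lt_mul_of_pos_right hc hρv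
          _ = 2*(1-δ)*ρ*v i := by ring
    · push_neg at hc
      rw [if_neg, if_pos, if_neg (not_lt.mpr hc)]
      · field_simp
        ring
      · calc t * (ρ * v i) ≤ 1 * (ρ * v i) := mul_le_mul_of_nonneg_right ht.2 hρv.le
          _ = ρ * v i := one_mul _
      · have h : 2*(1-δ) * (ρ*v i) ≤ t*(ρ*v i) := mul_le_mul_of_nonneg_right hc hρv.le
        have : 2*(1-δ)*ρ*v i ≤ t*(ρ*v i) := by linarith [h]
        linarith
  have hg : ∀ t, t ∈ Set.Icc (0:ℝ) 1 → gMap δ t ∈ Set.Icc (0:ℝ) 1 := by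
    intro t ht
    unfold gMap
    rw [Set.mem_Icc]
    split_ifs with hc <;> constructor <;> linarith [ht.1, ht.2]
  have hiter : ∀ k : ℕ, ∀ t, t ∈ Set.Icc (0:ℝ) 1 →
      (netE W ρ δ v)^[k] (t • v) = ((gMap δ)^[k] t) • v ∧
        (gMap δ)^[k] t ∈ Set.Icc (0:ℝ) 1 := by
    intro k
    induction k with
    | zero => intro t ht; simpa using ht
    | succ k ih =>
      intro t ht
      obtain ⟨ha, hb⟩ := ih t ht
      rw [Function.iterate_succ_apply', Function.iterate_succ_apply', ha, hstep _ hb]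
      exact ⟨rfl, hg _ hb⟩
  have hvne : v ≠ 0 := by
    intro h
    rw [h] at hsum
    simp at hsum
  have hnv : 0 < ‖v‖ := norm_pos_iff.mpr hvne
  intro ε hε
  obtain ⟨s₀, hs₀, k, hclose, hfar⟩ := hsens (ε / ‖v‖) (div_pos hε hnv)
  refine ⟨s₀ • v, ?_, k, ?_, ?_⟩
  · intro i
    have hvi1 : v i ≤ 1 := by
      have h := Finset.single_le_sum (f := v) (fun j _ => (hv j).le) (Finset.mem_univ i)
      rw [hsum] at h
      exact h
    show s₀ • v i ∈ Set.Icc (0:ℝ) 1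
    simp only [smul_eq_mul, Set.mem_Icc]
    constructor
    · exact mul_nonneg hs₀.1 (hv i).le
    · calc s₀ * v i ≤ 1 * 1 := mul_le_mul hs₀.2 hvi1 (hv i).le one_pos.le
        _ = 1 := one_mul 1
  · rw [← sub_smul, norm_smul, Real.norm_eq_abs]
    calc |s₀ - t₀| * ‖v‖ ≤ (ε / ‖v‖) * ‖v‖ := mul_le_mul_of_nonneg_right hclose hnv.le
      _ = ε := div_mul_cancel₀ ε hnv.ne'
  · rw [(hiter k s₀ hs₀).1, (hiter k t₀ ht₀).1, ← sub_smul, norm_smul, Real.norm_eq_abs]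
    exact mul_le_mul_of_nonneg_right hfar hnv.le
end
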